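/- arXiv:2106.04082 — 2 statements merged into one kernel-verified Lean document; each statement's English description precedes it below -/
import Mathlib

section
/- q-Hahn nested convolution identity: for 0 < q < 1, 0 < a₁, b₁, b₂ < 1, and 0 ≤ x ≤ y, Σ_{z=x}^{y} π_{qH}(x, z, a₁, b₁)·π_{qH}(z, y, a₁b₁, b₂) = π_{qH}(x, y, a₁, b₁b₂). -/
noncomputable def qPoch (a q : ℝ) (k : ℕ) : ℝ := ∏ j ∈ Finset.range k, (1 - a * q ^ j)

noncomputable def qBinom (n k : ℕ) (q : ℝ) : ℝ := qPoch q q n / (qPoch q q k * qPoch q q (n - k))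

lemma qPoch_zero (a q : ℝ) : qPoch a q 0 = 1 := by simp [qPoch]

lemma qPoch_succ (a q : ℝ) (k : ℕ) : qPoch a q (k+1) = qPoch a q k * (1 - a * q ^ k) :=
  Finset.prod_range_succ _ _

lemma qPoch_pos {a q : ℝ} (hq0 : 0 ≤ q) (hq1 : q ≤ 1) (ha0 : 0 ≤ a) (ha1 : a < 1) (k : ℕ) :
    0 < qPoch a q k := by
  apply Finset.prod_pos
  intro j _
  have hqj : q ^ j ≤ 1 := pow_le_one₀ hq0 hq1
  nlinarith [pow_nonneg hq0 j]

lemma qPoch_q_ne {q : ℝ} (hq : 0 < q) (hq1 : q < 1) (k : ℕ) : qPoch q q k ≠ 0 :=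
  (qPoch_pos hq.le hq1.le hq.le hq1 k).ne'

lemma qBinom_zero {q : ℝ} (hq : 0 < q) (hq1 : q < 1) (n : ℕ) : qBinom n 0 q = 1 := by
  simp [qBinom, qPoch_zero, div_self (qPoch_q_ne hq hq1 n)]

lemma qBinom_self {q : ℝ} (hq : 0 < q) (hq1 : q < 1) (n : ℕ) : qBinom n n q = 1 := by
  simp [qBinom, qPoch_zero, div_self (qPoch_q_ne hq hq1 n)]

lemma qBinom_pascal {q : ℝ} (hq : 0 < q) (hq1 : q < 1) {n k : ℕ} (hk : k < n) :
    qBinom (n+1) (k+1) q = qBinom n k q + q ^ (k+1) * qBinom n (k+1) q := by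
  obtain ⟨m, rfl⟩ : ∃ m, n = k + 1 + m := ⟨n - (k+1), by omega⟩
  have h1 : k + 1 + m + 1 - (k + 1) = m + 1 := by omega
  have h2 : k + 1 + m - k = m + 1 := by omega
  have h3 : k + 1 + m - (k + 1) = m := by omega
  rw [qBinom, qBinom, qBinom, h1, h2, h3, qPoch_succ q q (k+1+m), qPoch_succ q q m,
    qPoch_succ q q k]
  have e1 := qPoch_q_ne hq hq1 (k+1+m)
  have e2 := qPoch_q_ne hq hq1 k
  have e3 := qPoch_q_ne hq hq1 m
  have h4 : (1 : ℝ) - q * q ^ k ≠ 0 := by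
    have h := pow_lt_one₀ hq.le hq1 (Nat.succ_ne_zero k)
    rw [pow_succ'] at h; linarith
  have h5 : (1 : ℝ) - q * q ^ m ≠ 0 := by
    have h := pow_lt_one₀ hq.le hq1 (Nat.succ_ne_zero m)
    rw [pow_succ'] at h; linarith
  field_simp
  ring

lemma key_sum {q B C : ℝ} (hq : 0 < q) (hq1 : q < 1) (n : ℕ) :
    ∑ k ∈ Finset.range (n+1),
        qBinom n k q * qPoch B q k * qPoch C q (n-k) * B ^ (n-k)
      = qPoch (B*C) q n := by
  induction n with
  | zero => simp [qBinom_zero hq hq1, qPoch_zero]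
  | succ n ih =>
    set f1 : ℕ → ℝ := fun j => qBinom n j q * qPoch B q (j+1) * qPoch C q (n-j) * B ^ (n-j)
      with hf1
    set f2 : ℕ → ℝ := fun k =>
        q ^ k * (qBinom n k q * qPoch B q k * qPoch C q (n+1-k) * B ^ (n+1-k)) with hf2
    have split : ∑ k ∈ Finset.range (n+2),
        qBinom (n+1) k q * qPoch B q k * qPoch C q (n+1-k) * B ^ (n+1-k)
        = (∑ j ∈ Finset.range (n+1), f1 j) + ∑ k ∈ Finset.range (n+1), f2 k := by
      rw [Finset.sum_range_succ'
        (fun k => qBinom (n+1) k q * qPoch B q k * qPoch C q (n+1-k) * B ^ (n+1-k)) (n+1)]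
      rw [Finset.sum_range_succ
        (fun j => qBinom (n+1) (j+1) q * qPoch B q (j+1) * qPoch C q (n+1-(j+1)) * B ^ (n+1-(j+1))) n]
      rw [Finset.sum_range_succ f1 n, Finset.sum_range_succ' f2 n]
      have hmid : ∀ j ∈ Finset.range n,
          qBinom (n+1) (j+1) q * qPoch B q (j+1) * qPoch C q (n+1-(j+1)) * B ^ (n+1-(j+1))
            = f1 j + f2 (j+1) := by
        intro j hj
        rw [Finset.mem_range] at hj
        have h1 : n + 1 - (j+1) = n - j := by omega
        rw [qBinom_pascal hq hq1 hj, h1, hf1, hf2]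
        simp only []
        rw [h1]
        ring
      rw [Finset.sum_congr rfl hmid, Finset.sum_add_distrib]
      have hlast : qBinom (n+1) (n+1) q * qPoch B q (n+1) * qPoch C q (n+1-(n+1)) * B ^ (n+1-(n+1))
          = f1 n := by
        rw [qBinom_self hq hq1, hf1]
        simp [qBinom_self hq hq1, qPoch_zero]
      have hfirst : qBinom (n+1) 0 q * qPoch B q 0 * qPoch C q (n+1-0) * B ^ (n+1-0) = f2 0 := by
        rw [qBinom_zero hq hq1, hf2]
        simp [qBinom_zero hq hq1]
      rw [hlast, hfirst]
      ring
    rw [split, qPoch_succ, ← ih, ← Finset.sum_add_distrib, Finset.sum_mul]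
    apply Finset.sum_congr rfl
    intro k hk
    rw [Finset.mem_range] at hk
    have hk' : k ≤ n := by omega
    have h1 : n + 1 - k = (n - k) + 1 := by omega
    rw [hf1, hf2]
    simp only []
    rw [h1, qPoch_succ C q (n-k), qPoch_succ B q k, pow_succ B (n-k)]
    have hqn : q ^ k * q ^ (n - k) = q ^ n := by
      rw [← pow_add]; congr 1; omega
    linear_combination (-(qBinom n k q * qPoch B q k * qPoch C q (n-k) * B ^ (n-k) * B * C)) * hqn

lemma qBinom_mul {q : ℝ} (hq : 0 < q) (hq1 : q < 1) (x k n : ℕ) (hk : k ≤ n) :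
    qBinom (x+k) x q * qBinom (x+n) (x+k) q = qBinom (x+n) x q * qBinom n k q := by
  have h1 : x + k - x = k := by omega
  have h2 : x + n - (x + k) = n - k := by omega
  have h3 : x + n - x = n := by omega
  rw [qBinom, qBinom, qBinom, qBinom, h1, h2, h3]
  have e1 := qPoch_q_ne hq hq1 x
  have e2 := qPoch_q_ne hq hq1 k
  have e3 := qPoch_q_ne hq hq1 (n-k)
  have e4 := qPoch_q_ne hq hq1 (x+k)
  have e5 := qPoch_q_ne hq hq1 (x+n)
  have e6 := qPoch_q_ne hq hq1 n
  field_simp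

noncomputable def piqH (x N : ℕ) (a b q : ℝ) : ℝ :=
  qBinom N x q * qPoch a q x * qPoch b q (N - x) * a ^ (N - x) / qPoch (a * b) q N

theorem stmt_16 (q a₁ b₁ b₂ : ℝ) (hq : 0 < q) (hq1 : q < 1)
    (ha₁ : 0 < a₁) (ha₁' : a₁ < 1) (hb₁ : 0 < b₁) (hb₁' : b₁ < 1)
    (hb₂ : 0 < b₂) (hb₂' : b₂ < 1) (x y : ℕ) (hxy : x ≤ y) :
    ∑ z ∈ Finset.Icc x y, piqH x z a₁ b₁ q * piqH z y (a₁ * b₁) b₂ q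
      = piqH x y a₁ (b₁ * b₂) q := by
  obtain ⟨n, rfl⟩ : ∃ n, y = x + n := ⟨y - x, by omega⟩
  have hAB : 0 < a₁ * b₁ := mul_pos ha₁ hb₁
  have hAB' : a₁ * b₁ < 1 := by nlinarith
  have hABC : 0 < a₁ * b₁ * b₂ := mul_pos hAB hb₂
  have hABC' : a₁ * b₁ * b₂ < 1 := by nlinarith
  set c : ℝ := qBinom (x+n) x q * qPoch a₁ q x * a₁ ^ n / qPoch (a₁ * b₁ * b₂) q (x+n) with hc
  have hterm : ∀ k ∈ Finset.range (n+1),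
      piqH x (x+k) a₁ b₁ q * piqH (x+k) (x+n) (a₁*b₁) b₂ q
        = c * (qBinom n k q * qPoch b₁ q k * qPoch b₂ q (n-k) * b₁ ^ (n-k)) := by
    intro k hk
    rw [Finset.mem_range] at hk
    have hk' : k ≤ n := by omega
    have h1 : x + k - x = k := by omega
    have h2 : x + n - (x + k) = n - k := by omega
    rw [piqH, piqH, h1, h2, hc]
    have hbin := qBinom_mul hq hq1 x k n hk'
    have hpow : a₁ ^ k * (a₁ * b₁) ^ (n-k) = a₁ ^ n * b₁ ^ (n-k) := by
      rw [mul_pow, ← mul_assoc, ← pow_add]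
      congr 2
      omega
    have d1 : qPoch (a₁ * b₁) q (x+k) ≠ 0 :=
      (qPoch_pos hq.le hq1.le hAB.le hAB' _).ne'
    have d2 : qPoch (a₁ * b₁ * b₂) q (x+n) ≠ 0 :=
      (qPoch_pos hq.le hq1.le hABC.le hABC' _).ne'
    have hpow' : a₁ ^ k * a₁ ^ (n-k) = a₁ ^ n := by
      rw [← pow_add]; congr 1; omega
    field_simp
    linear_combination (qPoch a₁ q x * qPoch b₁ q k * qPoch b₂ q (n-k) * b₁ ^ (n-k) *
        (a₁ ^ k * a₁ ^ (n-k))) * hbin +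
      (qPoch a₁ q x * qPoch b₁ q k * qPoch b₂ q (n-k) * b₁ ^ (n-k) *
        qBinom (x+n) x q * qBinom n k q) * hpow'
  have hIcc : ∑ z ∈ Finset.Icc x (x+n), piqH x z a₁ b₁ q * piqH z (x+n) (a₁ * b₁) b₂ q
      = ∑ k ∈ Finset.range (n+1), piqH x (x+k) a₁ b₁ q * piqH (x+k) (x+n) (a₁*b₁) b₂ q := by
    rw [← Finset.Ico_add_one_right_eq_Icc, Finset.sum_Ico_eq_sum_range]
    have hr : x + n + 1 - x = n + 1 := by omega
    rw [hr]
  rw [hIcc, Finset.sum_congr rfl hterm, ← Finset.mul_sum, key_sum hq hq1, piqH, hc]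
  have h3 : x + n - x = n := by omega
  rw [h3, ← mul_assoc]
  ring
end

section
/- Eigenvalues of the type (i) Krawtchouk Markov chain: let K(x,y) = Σ_{z=0}^{min(x,y)} π_K(x−z, N−z, b)·π_K(z, y, a) for x,y ∈ {0,...,N}, with 0 < a,b < 1 and p = b/(1−a+ab). Then for each n, Σ_{y=0}^{N} π_K(y, N, b)·P_n(y, p) = a^n (1−b)^n, where P_n(x,p) = ₂F₁(−n, −x; −N; 1/p) is the Krawtchouk polynomial (a finite sum: Σ_{k=0}^{n} (−n)_k(−x)_k/((−N)_k k!) p^{−k}). -/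
noncomputable def risingFactorial (a : ℝ) (k : ℕ) : ℝ := ∏ j ∈ Finset.range k, (a + j)

noncomputable def piK (x N : ℕ) (p : ℝ) : ℝ := (Nat.choose N x : ℝ) * p ^ x * (1 - p) ^ (N - x)

/-- Krawtchouk polynomial `P_n(x,p)` on `{0,...,N}` as a terminating hypergeometric sum. -/
noncomputable def krawtchouk (N n x : ℕ) (p : ℝ) : ℝ :=
  ∑ k ∈ Finset.range (n+1),
    risingFactorial (-(n : ℝ)) k * risingFactorial (-(x : ℝ)) k * p⁻¹ ^ k
      / (risingFactorial (-(N : ℝ)) k * (Nat.factorial k))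

lemma rf_succ (a : ℝ) (k : ℕ) :
    risingFactorial a (k+1) = risingFactorial a k * (a + k) :=
  Finset.prod_range_succ _ _

lemma choose_step (m k : ℕ) :
    (m.choose k : ℝ) * ((m : ℝ) - k) = (m.choose (k+1) : ℝ) * (k+1) := by
  rcases le_or_gt k m with h | h
  · have h1 := Nat.choose_succ_right_eq m k
    have h2 : (m.choose (k+1) : ℝ) * (k+1) = (m.choose k : ℝ) * ((m : ℕ) - k : ℕ) := by
      exact_mod_cast h1
    push_cast [h] at h2
    linarith
  · rw [Nat.choose_eq_zero_of_lt h, Nat.choose_eq_zero_of_lt (Nat.lt_succ_of_lt h)]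
    simp

lemma rf_eq (m k : ℕ) :
    risingFactorial (-(m : ℝ)) k = (-1)^k * (Nat.factorial k : ℝ) * (m.choose k : ℝ) := by
  induction k with
  | zero => simp [risingFactorial]
  | succ k ih =>
    rw [rf_succ, ih, Nat.factorial_succ]
    push_cast
    linear_combination ((-1:ℝ))^(k+1) * (Nat.factorial k : ℝ) * choose_step m k

lemma binom_one (b : ℝ) (M : ℕ) :
    ∑ t ∈ Finset.range (M+1), (M.choose t : ℝ) * b^t * (1-b)^(M-t) = 1 := by
  have h := add_pow b (1-b) M
  calc ∑ t ∈ Finset.range (M+1), (M.choose t : ℝ) * b^t * (1-b)^(M-t)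
      = ∑ t ∈ Finset.range (M+1), b^t * (1-b)^(M-t) * (M.choose t : ℝ) :=
        Finset.sum_congr rfl fun t _ => by ring
    _ = (b + (1-b))^M := h.symm
    _ = 1 := by norm_num

lemma binom_moment (b : ℝ) (N k : ℕ) (hk : k ≤ N) :
    ∑ y ∈ Finset.range (N+1), (N.choose y : ℝ) * b^y * (1-b)^(N-y) * (y.choose k : ℝ)
      = (N.choose k : ℝ) * b^k := by
  have hzero : ∀ y ∈ Finset.range (N+1), y ∉ Finset.Ico k (N+1) →
      (N.choose y : ℝ) * b^y * (1-b)^(N-y) * (y.choose k : ℝ) = 0 := by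
    intro y hy hy'
    have hy1 := Finset.mem_range.mp hy
    have : y < k := by
      simp only [Finset.mem_Ico, not_and, not_lt] at hy'
      by_contra hyk
      exact absurd (hy' (le_of_not_gt hyk)) (not_le.mpr hy1)
    rw [Nat.choose_eq_zero_of_lt this]
    simp
  rw [← Finset.sum_subset (by
      intro y hy
      simp only [Finset.mem_Ico] at hy
      exact Finset.mem_range.mpr hy.2) hzero]
  rw [Finset.sum_Ico_eq_sum_range]
  have hNk : N + 1 - k = (N - k) + 1 := by omega
  rw [hNk]
  have key : ∀ t ∈ Finset.range (N - k + 1),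
      (N.choose (k+t) : ℝ) * b^(k+t) * (1-b)^(N-(k+t)) * ((k+t).choose k : ℝ)
        = (N.choose k : ℝ) * b^k * ((N-k).choose t * b^t * (1-b)^((N-k)-t)) := by
    intro t ht
    have ht' : t ≤ N - k := Nat.lt_succ_iff.mp (Finset.mem_range.mp ht)
    have hktN : k + t ≤ N := by omega
    have hcm := Nat.choose_mul (n := N) (Nat.le_add_right k t)
    have hcm' : (N.choose (k+t) : ℝ) * ((k+t).choose k : ℝ)
        = (N.choose k : ℝ) * ((N-k).choose ((k+t)-k) : ℝ) := by exact_mod_cast hcm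
    have hsub : k + t - k = t := by omega
    have hsub2 : N - (k + t) = (N - k) - t := by omega
    rw [hsub] at hcm'
    rw [hsub2, pow_add]
    linear_combination (b^k * b^t * (1-b)^((N-k)-t)) * hcm'
  calc ∑ t ∈ Finset.range (N-k+1),
        (N.choose (k+t) : ℝ) * b^(k+t) * (1-b)^(N-(k+t)) * ((k+t).choose k : ℝ)
      = ∑ t ∈ Finset.range (N-k+1),
        (N.choose k : ℝ) * b^k * ((N-k).choose t * b^t * (1-b)^((N-k)-t)) :=
        Finset.sum_congr rfl key
    _ = (N.choose k : ℝ) * b^k * ∑ t ∈ Finset.range (N-k+1),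
          ((N-k).choose t : ℝ) * b^t * (1-b)^((N-k)-t) := by rw [Finset.mul_sum]
    _ = (N.choose k : ℝ) * b^k := by rw [binom_one]; ring

theorem stmt_17 (a b : ℝ) (ha : 0 < a) (ha1 : a < 1) (hb : 0 < b) (hb1 : b < 1)
    (N n : ℕ) (hn : n ≤ N) :
    ∑ y ∈ Finset.range (N+1), piK y N b * krawtchouk N n y (b / (1 - a + a * b))
      = a ^ n * (1 - b) ^ n := by
  have hd : (0:ℝ) < 1 - a + a * b := by nlinarith
  set p : ℝ := b / (1 - a + a * b) with hp
  have hpne : p ≠ 0 := div_ne_zero (ne_of_gt hb) (ne_of_gt hd)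
  have hbp : b * p⁻¹ = 1 - a + a * b := by
    field_simp [hp]
    rw [hp, mul_comm b a, div_mul_cancel₀ _ hd.ne']
  simp only [piK, krawtchouk, Finset.mul_sum]
  rw [Finset.sum_comm]
  have inner : ∀ k ∈ Finset.range (n+1),
      (∑ y ∈ Finset.range (N+1), (N.choose y : ℝ) * b^y * (1-b)^(N-y) *
        (risingFactorial (-(n:ℝ)) k * risingFactorial (-(y:ℝ)) k * p⁻¹^k
          / (risingFactorial (-(N:ℝ)) k * (Nat.factorial k))))
      = (n.choose k : ℝ) * (-(1 - a + a * b))^k := by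
    intro k hk
    have hkn : k ≤ n := Nat.lt_succ_iff.mp (Finset.mem_range.mp hk)
    have hkN : k ≤ N := hkn.trans hn
    have hfac : (Nat.factorial k : ℝ) ≠ 0 := Nat.cast_ne_zero.mpr (Nat.factorial_ne_zero k)
    have hch : (N.choose k : ℝ) ≠ 0 :=
      Nat.cast_ne_zero.mpr (Nat.choose_pos hkN).ne'
    have step1 : ∀ y : ℕ, risingFactorial (-(y:ℝ)) k = (-1)^k * (Nat.factorial k : ℝ) * (y.choose k : ℝ) :=
      fun y => rf_eq y k
    calc ∑ y ∈ Finset.range (N+1), (N.choose y : ℝ) * b^y * (1-b)^(N-y) *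
          (risingFactorial (-(n:ℝ)) k * risingFactorial (-(y:ℝ)) k * p⁻¹^k
            / (risingFactorial (-(N:ℝ)) k * (Nat.factorial k)))
        = (risingFactorial (-(n:ℝ)) k * p⁻¹^k * ((-1)^k * (Nat.factorial k : ℝ))
            / (risingFactorial (-(N:ℝ)) k * (Nat.factorial k))) *
          ∑ y ∈ Finset.range (N+1), (N.choose y : ℝ) * b^y * (1-b)^(N-y) * (y.choose k : ℝ) := by
          rw [Finset.mul_sum]
          refine Finset.sum_congr rfl fun y _ => ?_
          rw [step1 y]
          ring
      _ = (n.choose k : ℝ) * (-(1 - a + a * b))^k := by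
          rw [binom_moment b N k hkN, rf_eq n k, rf_eq N k, ← hbp]
          have hneg : (-(b * p⁻¹))^k = (-1)^k * b^k * (p⁻¹)^k := by
            rw [neg_pow, mul_pow]; ring
          field_simp
          ring
  rw [Finset.sum_congr rfl inner]
  have hpow : a ^ n * (1 - b) ^ n = ((-(1 - a + a * b)) + 1) ^ n := by
    rw [← mul_pow]; ring_nf
  rw [hpow, add_pow]
  refine Finset.sum_congr rfl fun k _ => by ring
end
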